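/- Let t₀ ∈ ℝ, t₁ > 0, α > 0, β ≥ 0, θ ∈ ℝ, ν ≥ 0, g > 0, z_b(x,y) = z_{b,0} constant, and let p^{a,1} : ℝ → ℝ be a given function of time. Set f(t) := 1/(t − t₀ + t₁) and, for t ≥ t₀, define h(t,x,y) := α f(t), u(t,x,y,z) := β( (z − z_b) − (α/2) f(t) ) + f(t)( x cos²θ + y sin²θ ), v(t,x,y,z) := β( (z − z_b) − (α/2) f(t) ) + f(t)( x cos²θ + y sin²θ ), w(t,x,y,z) := f(t)( z_b − z ), p(t,x,y,z) := p^{a,1}(t) − 2ν f(t) + g( h − (z − z_b) ). Then, for all t ≥ t₀ and all (x,y,z): (i) ∂_x u + ∂_y v + ∂_z w = 0; (ii) ∂_z p = − g; (iii) ∂_t u + u ∂_x u + v ∂_y u + w ∂_z u = − ∂_x p + ν (∂_x² + ∂_y²) u + ν ∂_z² u, and the analogous equation holds for v; (iv) the kinematic free-surface condition ∂_t η + u ∂_x η + v ∂_y η − w = 0 holds at z = η := z_b + h, and w = 0 at z = z_b. -/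

import Mathlib

open Real

/-- the 'draining of a tank' analytical solution of the 3d
incompressible hydrostatic Navier-Stokes system with free surface. -/
theorem stmt14 (t0 t1 α β θ ν g zb0 : ℝ)
    (ht1 : 0 < t1) (hα : 0 < α) (hβ : 0 ≤ β) (hν : 0 ≤ ν) (hg : 0 < g)
    (pa1 : ℝ → ℝ)
    (f : ℝ → ℝ) (hf : ∀ t, f t = 1 / (t - t0 + t1))
    (h : ℝ → ℝ → ℝ → ℝ) (hh : ∀ t x y, h t x y = α * f t)
    (u v w p : ℝ → ℝ → ℝ → ℝ → ℝ)
    (hu : ∀ t x y z, u t x y z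
      = β * ((z - zb0) - α / 2 * f t) + f t * (x * Real.cos θ ^ 2 + y * Real.sin θ ^ 2))
    (hv : ∀ t x y z, v t x y z
      = β * ((z - zb0) - α / 2 * f t) + f t * (x * Real.cos θ ^ 2 + y * Real.sin θ ^ 2))
    (hw : ∀ t x y z, w t x y z = f t * (zb0 - z))
    (hp : ∀ t x y z, p t x y z = pa1 t - 2 * ν * f t + g * (h t x y - (z - zb0))) :
    ∀ t, t0 ≤ t → ∀ x y z : ℝ,
      -- (i) incompressibility
      (deriv (fun s => u t s y z) x + deriv (fun s => v t x s z) y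
        + deriv (fun s => w t x y s) z = 0) ∧
      -- (ii) hydrostatic pressure
      (deriv (fun s => p t x y s) z = -g) ∧
      -- (iii) horizontal momentum equations
      (deriv (fun s => u s x y z) t + u t x y z * deriv (fun s => u t s y z) x
        + v t x y z * deriv (fun s => u t x s z) y + w t x y z * deriv (fun s => u t x y s) z
        = -deriv (fun s => p t s y z) x
          + ν * (deriv (fun s => deriv (fun r => u t r y z) s) x
            + deriv (fun s => deriv (fun r => u t x r z) s) y)
          + ν * deriv (fun s => deriv (fun r => u t x y r) s) z) ∧
      (deriv (fun s => v s x y z) t + u t x y z * deriv (fun s => v t s y z) x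
        + v t x y z * deriv (fun s => v t x s z) y + w t x y z * deriv (fun s => v t x y s) z
        = -deriv (fun s => p t x s z) y
          + ν * (deriv (fun s => deriv (fun r => v t r y z) s) x
            + deriv (fun s => deriv (fun r => v t x r z) s) y)
          + ν * deriv (fun s => deriv (fun r => v t x y r) s) z) ∧
      -- (iv) kinematic free-surface condition and bottom impermeability
      (deriv (fun s => h s x y + zb0) t
        + u t x y (zb0 + h t x y) * deriv (fun s => h t s y + zb0) x
        + v t x y (zb0 + h t x y) * deriv (fun s => h t x s + zb0) y
        - w t x y (zb0 + h t x y) = 0) ∧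
      (w t x y zb0 = 0) := by
  intro t ht x y z
  have hcs : Real.sin θ ^ 2 = 1 - Real.cos θ ^ 2 := Real.sin_sq θ
  set C := Real.cos θ ^ 2 with hC
  set S := Real.sin θ ^ 2 with hS
  have hD : (0:ℝ) < t - t0 + t1 := by linarith
  have hD0 : t - t0 + t1 ≠ 0 := ne_of_gt hD
  have hft : f t = (t - t0 + t1)⁻¹ := by rw [hf, one_div]
  -- derivative of the inverse-time function
  have hder : HasDerivAt (fun s : ℝ => (s - t0 + t1)⁻¹) (-1 / (t - t0 + t1) ^ 2) t := by
    have := (((hasDerivAt_id t).sub_const t0).add_const t1).inv hD0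
    exact this
  -- spatial derivatives of u (= v)
  have eux : deriv (fun s => u t s y z) x = f t * C := by
    simp only [hu]
    have : HasDerivAt (fun s : ℝ => β * ((z - zb0) - α / 2 * f t) + f t * (s * C + y * S))
        (f t * (1 * C)) x :=
      (((hasDerivAt_id x).mul_const C).add_const (y * S)).const_mul (f t)
        |>.const_add _
    rw [this.deriv]; ring
  have euy : deriv (fun s => u t x s z) y = f t * S := by
    simp only [hu]
    have : HasDerivAt (fun s : ℝ => β * ((z - zb0) - α / 2 * f t) + f t * (x * C + s * S))
        (f t * (1 * S)) y :=
      (((hasDerivAt_id y).mul_const S).const_add (x * C)).const_mul (f t)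
        |>.const_add _
    rw [this.deriv]; ring
  have euz : deriv (fun s => u t x y s) z = β := by
    simp only [hu]
    have : HasDerivAt (fun s : ℝ => β * ((s - zb0) - α / 2 * f t) + f t * (x * C + y * S))
        (β * 1) z :=
      ((((hasDerivAt_id z).sub_const zb0).sub_const (α / 2 * f t)).const_mul β).add_const _
    rw [this.deriv]; ring
  have evx : deriv (fun s => v t s y z) x = f t * C := by
    simp only [hv]
    have : HasDerivAt (fun s : ℝ => β * ((z - zb0) - α / 2 * f t) + f t * (s * C + y * S))
        (f t * (1 * C)) x :=
      (((hasDerivAt_id x).mul_const C).add_const (y * S)).const_mul (f t)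
        |>.const_add _
    rw [this.deriv]; ring
  have evy : deriv (fun s => v t x s z) y = f t * S := by
    simp only [hv]
    have : HasDerivAt (fun s : ℝ => β * ((z - zb0) - α / 2 * f t) + f t * (x * C + s * S))
        (f t * (1 * S)) y :=
      (((hasDerivAt_id y).mul_const S).const_add (x * C)).const_mul (f t)
        |>.const_add _
    rw [this.deriv]; ring
  have evz : deriv (fun s => v t x y s) z = β := by
    simp only [hv]
    have : HasDerivAt (fun s : ℝ => β * ((s - zb0) - α / 2 * f t) + f t * (x * C + y * S))
        (β * 1) z :=
      ((((hasDerivAt_id z).sub_const zb0).sub_const (α / 2 * f t)).const_mul β).add_const _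
    rw [this.deriv]; ring
  have ewz : ∀ r : ℝ, deriv (fun s => w t x y s) r = -(f t) := by
    intro r
    simp only [hw]
    have : HasDerivAt (fun s : ℝ => f t * (zb0 - s)) (f t * (-1)) r :=
      ((hasDerivAt_id r).const_sub zb0).const_mul (f t)
    rw [this.deriv]; ring
  have epz : deriv (fun s => p t x y s) z = -g := by
    simp only [hp]
    have : HasDerivAt (fun s : ℝ => pa1 t - 2 * ν * f t + g * (h t x y - (s - zb0)))
        (g * (-1)) z :=
      ((((hasDerivAt_id z).sub_const zb0).const_sub (h t x y)).const_mul g).const_add _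
    rw [this.deriv]; ring
  have epx : deriv (fun s => p t s y z) x = 0 := by
    simp only [hp, hh]; exact deriv_const _ _
  have epy : deriv (fun s => p t x s z) y = 0 := by
    simp only [hp, hh]; exact deriv_const _ _
  -- second spatial derivatives vanish
  have euxx : deriv (fun s => deriv (fun r => u t r y z) s) x = 0 := by
    have : (fun s => deriv (fun r => u t r y z) s) = fun _ : ℝ => f t * C := by
      funext s
      simp only [hu]
      have : HasDerivAt (fun r : ℝ => β * ((z - zb0) - α / 2 * f t) + f t * (r * C + y * S))
          (f t * (1 * C)) s :=
        (((hasDerivAt_id s).mul_const C).add_const (y * S)).const_mul (f t)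
          |>.const_add _
      rw [this.deriv]; ring
    rw [this]; exact deriv_const _ _
  have euyy : deriv (fun s => deriv (fun r => u t x r z) s) y = 0 := by
    have : (fun s => deriv (fun r => u t x r z) s) = fun _ : ℝ => f t * S := by
      funext s
      simp only [hu]
      have : HasDerivAt (fun r : ℝ => β * ((z - zb0) - α / 2 * f t) + f t * (x * C + r * S))
          (f t * (1 * S)) s :=
        (((hasDerivAt_id s).mul_const S).const_add (x * C)).const_mul (f t)
          |>.const_add _
      rw [this.deriv]; ring
    rw [this]; exact deriv_const _ _
  have euzz : deriv (fun s => deriv (fun r => u t x y r) s) z = 0 := by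
    have : (fun s => deriv (fun r => u t x y r) s) = fun _ : ℝ => β := by
      funext s
      simp only [hu]
      have : HasDerivAt (fun r : ℝ => β * ((r - zb0) - α / 2 * f t) + f t * (x * C + y * S))
          (β * 1) s :=
        ((((hasDerivAt_id s).sub_const zb0).sub_const (α / 2 * f t)).const_mul β).add_const _
      rw [this.deriv]; ring
    rw [this]; exact deriv_const _ _
  have evxx : deriv (fun s => deriv (fun r => v t r y z) s) x = 0 := by
    have : (fun s => deriv (fun r => v t r y z) s) = fun _ : ℝ => f t * C := by
      funext s
      simp only [hv]
      have : HasDerivAt (fun r : ℝ => β * ((z - zb0) - α / 2 * f t) + f t * (r * C + y * S))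
          (f t * (1 * C)) s :=
        (((hasDerivAt_id s).mul_const C).add_const (y * S)).const_mul (f t)
          |>.const_add _
      rw [this.deriv]; ring
    rw [this]; exact deriv_const _ _
  have evyy : deriv (fun s => deriv (fun r => v t x r z) s) y = 0 := by
    have : (fun s => deriv (fun r => v t x r z) s) = fun _ : ℝ => f t * S := by
      funext s
      simp only [hv]
      have : HasDerivAt (fun r : ℝ => β * ((z - zb0) - α / 2 * f t) + f t * (x * C + r * S))
          (f t * (1 * S)) s :=
        (((hasDerivAt_id s).mul_const S).const_add (x * C)).const_mul (f t)
          |>.const_add _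
      rw [this.deriv]; ring
    rw [this]; exact deriv_const _ _
  have evzz : deriv (fun s => deriv (fun r => v t x y r) s) z = 0 := by
    have : (fun s => deriv (fun r => v t x y r) s) = fun _ : ℝ => β := by
      funext s
      simp only [hv]
      have : HasDerivAt (fun r : ℝ => β * ((r - zb0) - α / 2 * f t) + f t * (x * C + y * S))
          (β * 1) s :=
        ((((hasDerivAt_id s).sub_const zb0).sub_const (α / 2 * f t)).const_mul β).add_const _
      rw [this.deriv]; ring
    rw [this]; exact deriv_const _ _
  -- time derivatives
  have eut : deriv (fun s => u s x y z) t
      = β * -(α / 2 * (-1 / (t - t0 + t1) ^ 2)) + -1 / (t - t0 + t1) ^ 2 * (x * C + y * S) := by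
    simp only [hu, hf, one_div]
    have : HasDerivAt
        (fun s : ℝ => β * ((z - zb0) - α / 2 * (s - t0 + t1)⁻¹) + (s - t0 + t1)⁻¹ * (x * C + y * S))
        (β * -(α / 2 * (-1 / (t - t0 + t1) ^ 2)) + -1 / (t - t0 + t1) ^ 2 * (x * C + y * S)) t :=
      (((hder.const_mul (α / 2)).const_sub (z - zb0)).const_mul β).add (hder.mul_const _)
    rw [this.deriv]
  have evt : deriv (fun s => v s x y z) t
      = β * -(α / 2 * (-1 / (t - t0 + t1) ^ 2)) + -1 / (t - t0 + t1) ^ 2 * (x * C + y * S) := by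
    simp only [hv, hf, one_div]
    have : HasDerivAt
        (fun s : ℝ => β * ((z - zb0) - α / 2 * (s - t0 + t1)⁻¹) + (s - t0 + t1)⁻¹ * (x * C + y * S))
        (β * -(α / 2 * (-1 / (t - t0 + t1) ^ 2)) + -1 / (t - t0 + t1) ^ 2 * (x * C + y * S)) t :=
      (((hder.const_mul (α / 2)).const_sub (z - zb0)).const_mul β).add (hder.mul_const _)
    rw [this.deriv]
  have eht : deriv (fun s => h s x y + zb0) t = α * (-1 / (t - t0 + t1) ^ 2) := by
    simp only [hh, hf, one_div]
    have : HasDerivAt (fun s : ℝ => α * (s - t0 + t1)⁻¹ + zb0)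
        (α * (-1 / (t - t0 + t1) ^ 2)) t := (hder.const_mul α).add_const zb0
    rw [this.deriv]
  have ehx : deriv (fun s => h t s y + zb0) x = 0 := by
    simp only [hh]; exact deriv_const _ _
  have ehy : deriv (fun s => h t x s + zb0) y = 0 := by
    simp only [hh]; exact deriv_const _ _
  refine ⟨?_, ?_, ?_, ?_, ?_, ?_⟩
  · rw [eux, evy, ewz, hft, hcs]; ring
  · exact epz
  · rw [eut, eux, euy, euz, epx, euxx, euyy, euzz, hu, hv, hw, hft, hcs]
    field_simp
    ring
  · rw [evt, evx, evy, evz, epy, evxx, evyy, evzz, hu, hv, hw, hft, hcs]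
    field_simp
    ring
  · rw [eht, ehx, ehy, hu, hv, hw, hh, hft, hcs]
    field_simp
    ring
  · rw [hw]; ring
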